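/- Let A be an associative unital algebra over a field F and L a field extension of F. If for every finite field extension F' of F the algebra F' ⊗_F A has no nonzero nilpotent elements, then L ⊗_F A has no nonzero nilpotent elements. -/

import Mathlib

open scoped TensorProduct

universe u v w

section Aux

/-- In a monoid with zero in which every square-zero element is zero,
every nilpotent element is zero. -/
lemma eq_zero_of_pow_of_sq {R : Type*} [MonoidWithZero R]
    (h : ∀ y : R, y * y = 0 → y = 0) :
    ∀ (n : ℕ) (x : R), x ^ n = 0 → x = 0 := by
  intro n
  induction n using Nat.strong_induction_on with
  | _ n ih =>
    intro x hx
    match n, hx with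
    | 0, hx =>
      have h1 : (1 : R) = 0 := by simpa using hx
      calc x = x * 1 := (mul_one x).symm
        _ = 0 := by rw [h1, mul_zero]
    | 1, hx => simpa using hx
    | (n + 2), hx =>
      set k := n + 2 with hk
      set m := (k + 1) / 2 with hm
      have h1 : k + (2 * m - k) = 2 * m := by omega
      have h2 : m < k := by omega
      have hsq : x ^ m * x ^ m = 0 := by
        rw [← pow_add, ← two_mul, ← h1, pow_add, hx, zero_mul]
      exact ih m h2 x (h _ hsq)

variable {F : Type*} [Field F] {A : Type*} [AddCommGroup A] [Module F A]
variable {ι : Type*} [DecidableEq ι] (b : Module.Basis ι F A)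

/-- Coordinates of an element of `M ⊗[F] A` with respect to a basis of `A`. -/
noncomputable def coordsE (M : Type*) [AddCommGroup M] [Module F M] :
    M ⊗[F] A ≃ₗ[F] (ι →₀ M) :=
  (TensorProduct.congr (LinearEquiv.refl F M) b.repr).trans
    (TensorProduct.finsuppScalarRight F F M ι)

lemma coordsE_tmul (M : Type*) [AddCommGroup M] [Module F M] (m : M) (a : A) (i : ι) :
    coordsE b M (m ⊗ₜ[F] a) i = b.repr a i • m := by
  simp [coordsE, TensorProduct.congr_tmul,
    TensorProduct.finsuppScalarRight_apply_tmul_apply]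

/-- Naturality of the coordinates with respect to maps of the form `f ⊗ id`. -/
lemma coordsE_nat {M N : Type*} [AddCommGroup M] [Module F M] [AddCommGroup N] [Module F N]
    (f : M →ₗ[F] N) (Ψ : M ⊗[F] A →ₗ[F] N ⊗[F] A)
    (hΨ : ∀ (m : M) (a : A), Ψ (m ⊗ₜ[F] a) = f m ⊗ₜ[F] a)
    (t : M ⊗[F] A) (i : ι) :
    coordsE b N (Ψ t) i = f (coordsE b M t i) := by
  induction t using TensorProduct.induction_on with
  | zero => simp
  | tmul m a => rw [hΨ, coordsE_tmul, coordsE_tmul, map_smul]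
  | add x y hx hy => simp [map_add, Finsupp.add_apply, hx, hy]

end Aux


/-- Every maximal ideal of a finite type algebra over a field `F : Type u` has a residue
field which can be realized as a finite-dimensional field extension of `F` in `Type u`. -/
lemma exists_residue {F : Type u} [Field F] {R : Type*} [CommRing R] [Algebra F R]
    [Algebra.FiniteType F R] (J : Ideal R) (hJ : J.IsMaximal) :
    ∃ (K : Type u) (_ : Field K) (_ : Algebra F K) (_ : FiniteDimensional F K)
      (ρ : R →ₐ[F] K), ∀ x : R, ρ x = 0 ↔ x ∈ J := by
  letI : Field (R ⧸ J) := Ideal.Quotient.field J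
  haveI : Algebra.FiniteType F (R ⧸ J) :=
    Algebra.FiniteType.of_surjective
      (Ideal.Quotient.mkₐ F J) Ideal.Quotient.mk_surjective
  haveI : Module.Finite F (R ⧸ J) := finite_of_finite_type_of_isJacobsonRing F (R ⧸ J)
  haveI : Small.{u} (R ⧸ J) :=
    small_of_injective (Module.finBasis F (R ⧸ J)).equivFun.injective
  refine ⟨Shrink.{u} (R ⧸ J), inferInstance, inferInstance,
    Module.Finite.equiv (Shrink.linearEquiv F (R ⧸ J) : Shrink.{u} (R ⧸ J) ≃ₗ[F] R ⧸ J).symm,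
    (Shrink.algEquiv F (R ⧸ J) : Shrink.{u} (R ⧸ J) ≃ₐ[F] R ⧸ J).symm.toAlgHom.comp (Ideal.Quotient.mkₐ F J), fun x => ?_⟩
  rw [AlgHom.comp_apply, ← Ideal.Quotient.eq_zero_iff_mem (I := J), Ideal.Quotient.mkₐ_eq_mk]
  exact map_eq_zero_iff _ (Shrink.algEquiv F (R ⧸ J) : Shrink.{u} (R ⧸ J) ≃ₐ[F] R ⧸ J).symm.injective

set_option maxHeartbeats 1000000 in
set_option synthInstance.maxHeartbeats 200000 in
/-- let `A` be an associative unital algebra over a field `F` and `L` a field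
extension of `F`. If for every finite field extension `F'` of `F` the algebra `F' ⊗[F] A`
has no nonzero nilpotent elements (i.e. is reduced), then `L ⊗[F] A` is reduced. -/
theorem stmt7 (F : Type u) [Field F] (A : Type v) [Ring A] [Algebra F A]
    (L : Type w) [Field L] [Algebra F L]
    (h : ∀ (F' : Type u) [Field F'] [Algebra F F'], FiniteDimensional F F' →
      IsReduced (F' ⊗[F] A)) :
    IsReduced (L ⊗[F] A) := by
  classical
  have key : ∀ z : L ⊗[F] A, z * z = 0 → z = 0 := by
    intro z hz
    obtain ⟨s, hs⟩ := TensorProduct.exists_finset z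
    set R : Subalgebra F L := Algebra.adjoin F (↑(s.image Prod.fst) : Set L) with hR
    haveI : Algebra.FiniteType F R := by
      rw [← Subalgebra.fg_iff_finiteType]
      exact Subalgebra.fg_adjoin_finset _
    haveI : IsJacobsonRing R := isJacobsonRing_of_finiteType (A := F)
    let b := Module.Basis.ofVectorSpace F A
    let φ : R ⊗[F] A →ₐ[F] L ⊗[F] A :=
      Algebra.TensorProduct.map R.val (AlgHom.id F A)
    have hφ : ∀ (m : R) (a : A), φ.toLinearMap (m ⊗ₜ[F] a) = R.val.toLinearMap m ⊗ₜ[F] a :=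
      fun m a => by simp [φ]
    have hmem : ∀ p ∈ s, (p : L × A).1 ∈ R := fun p hp =>
      Algebra.subset_adjoin (by
        simpa using Finset.mem_image_of_mem Prod.fst hp)
    let w : R ⊗[F] A := ∑ p ∈ s.attach, ((⟨p.1.1, hmem p.1 p.2⟩ : R) ⊗ₜ[F] p.1.2)
    have hφw : φ w = z := by
      rw [hs]
      simp only [w, map_sum, Algebra.TensorProduct.map_tmul, AlgHom.coe_id, id_eq,
        Subalgebra.coe_val]
      exact Finset.sum_attach s fun p => p.1 ⊗ₜ[F] p.2
    -- `w * w = 0` since its coordinates inject into those of `φ (w * w) = z * z = 0`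
    have hww : w * w = 0 := by
      have h0 : φ (w * w) = 0 := by rw [map_mul, hφw, hz]
      apply (coordsE b R).injective
      rw [map_zero]
      refine Finsupp.ext fun i => ?_
      have hnat := coordsE_nat b R.val.toLinearMap φ.toLinearMap hφ (w * w) i
      have hv : R.val.toLinearMap (coordsE b R (w * w) i) = 0 := by
        rw [← hnat]
        show coordsE b L (φ.toLinearMap (w * w)) i = 0
        show coordsE b L (φ (w * w)) i = 0
        rw [h0, map_zero, Finsupp.zero_apply]
      have hv2 := Subtype.val_injective (a₁ := coordsE b (↥R) (w * w) i) (a₂ := 0) hv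
      rw [hv2, Finsupp.zero_apply]
    -- the coordinates of `w` lie in every maximal ideal of `R`
    have hcoord : ∀ i, coordsE b R w i = 0 := by
      intro i
      have hjac : (coordsE b R w i : R) ∈ (⊥ : Ideal R).jacobson := by
        rw [Ideal.jacobson, Ideal.mem_sInf]
        rintro J ⟨-, hJmax⟩
        obtain ⟨K, hKf, hKa, hKfd, ρ, hρ⟩ := exists_residue (F := F) J hJmax
        haveI : IsReduced (K ⊗[F] A) := h K hKfd
        let ψ : R ⊗[F] A →ₐ[F] K ⊗[F] A :=
          Algebra.TensorProduct.map ρ (AlgHom.id F A)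
        have hψ0 : ψ w = 0 := by
          refine IsReduced.eq_zero _ ⟨2, ?_⟩
          rw [pow_two, ← map_mul, hww, map_zero]
        have hnat := coordsE_nat b ρ.toLinearMap ψ.toLinearMap
          (fun m a => by simp [ψ]) w i
        have h1 : coordsE b K (ψ.toLinearMap w) i = 0 := by
          show coordsE b K (ψ w) i = 0
          rw [hψ0, map_zero, Finsupp.zero_apply]
        exact (hρ _).mp (hnat.symm.trans h1)
      have hbot : (⊥ : Ideal R).jacobson = ⊥ := by
        rw [← Ideal.radical_eq_jacobson]
        exact Ideal.radical_bot_of_noZeroDivisors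
      rw [hbot] at hjac
      simpa using hjac
    have hw0 : w = 0 := by
      apply (coordsE b R).injective
      rw [map_zero]
      exact Finsupp.ext fun i => by rw [hcoord i, Finsupp.zero_apply]
    rw [← hφw, hw0, map_zero]
  constructor
  rintro z ⟨n, hn⟩
  exact eq_zero_of_pow_of_sq key n z hn
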